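/- arXiv:2105.07456 — 2 statements merged into one kernel-verified Lean document; each statement's English description precedes it below -/
import Mathlib

section
/- Let s ≥ 2, H ≥ 1, k ≥ 1 be integers and let (m₁,…,m_k), (p₁,…,p_k) be tuples of naturals with positive sums and r(m₁,…,m_k) ≠ r(p₁,…,p_k) (as tuples of rationals), where r normalizes by the sum. If kH/(s−1) < max_i |r(p)ᵢ − r(m)ᵢ|, and n₁,…,n_k satisfy (s−1)mᵢ ≤ nᵢ ≤ (s−1)mᵢ + H for all i with T = Σnᵢ, then (n₁/T, …, n_k/T) ≠ r(p₁,…,p_k). -/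
/-- If `kH/(s−1)` is smaller than the sup-distance between the repartitions `r(p)` and
`r(m)`, and `(s−1)mᵢ ≤ nᵢ ≤ (s−1)mᵢ + H` for all `i`, then the normalized frequency
vector `(nᵢ/T)ᵢ` differs from `r(p)`. -/
theorem stmt5 {k : ℕ} [NeZero k] (s H : ℕ) (hs : 2 ≤ s) (hH : 1 ≤ H)
    (m p n : Fin k → ℕ) (hm : ∑ i, m i ≠ 0) (hp : ∑ i, p i ≠ 0)
    (hrne : (fun i => (m i : ℚ) / ((∑ j, m j : ℕ) : ℚ)) ≠
      (fun i => (p i : ℚ) / ((∑ j, p j : ℕ) : ℚ)))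
    (hsep : (k : ℚ) * (H : ℚ) / ((s : ℚ) - 1) <
      Finset.univ.sup' Finset.univ_nonempty
        (fun i => |(p i : ℚ) / ((∑ j, p j : ℕ) : ℚ) - (m i : ℚ) / ((∑ j, m j : ℕ) : ℚ)|))
    (hbound : ∀ i, (s - 1) * m i ≤ n i ∧ n i ≤ (s - 1) * m i + H) :
    (fun i => (n i : ℚ) / ((∑ j, n j : ℕ) : ℚ)) ≠
      (fun i => (p i : ℚ) / ((∑ j, p j : ℕ) : ℚ)) := by
  intro heq
  set M : ℕ := ∑ j, m j with hMdef
  set T : ℕ := ∑ j, n j with hTdef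
  have hM1 : 1 ≤ M := Nat.one_le_iff_ne_zero.mpr hm
  have hs1 : 1 ≤ s - 1 := by omega
  have hT1 : (s - 1) * M ≤ T := by
    rw [hTdef, hMdef, Finset.mul_sum]
    exact Finset.sum_le_sum fun i _ => (hbound i).1
  have hT2 : T ≤ (s - 1) * M + k * H := by
    calc T ≤ ∑ i : Fin k, ((s - 1) * m i + H) :=
          Finset.sum_le_sum fun i _ => (hbound i).2
      _ = (s - 1) * M + k * H := by
          rw [Finset.sum_add_distrib, ← Finset.mul_sum, hMdef]
          simp [Finset.sum_const, mul_comm]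
  have hTpos : 0 < T := by nlinarith
  have hMQ : (0:ℚ) < (M:ℚ) := by exact_mod_cast hM1
  have hTQ : (0:ℚ) < (T:ℚ) := by exact_mod_cast hTpos
  have hsQ : (1:ℚ) ≤ (s:ℚ) - 1 := by
    have : (2:ℚ) ≤ (s:ℚ) := by exact_mod_cast hs
    linarith
  have hcast : ((s - 1 : ℕ) : ℚ) = (s:ℚ) - 1 := by
    have := Nat.cast_sub (le_trans (by norm_num) hs) (R := ℚ) (m := 1) (n := s)
    simpa using this
  have hsT : (s:ℚ) - 1 ≤ (T:ℚ) := by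
    have : (s - 1) * 1 ≤ T := le_trans (Nat.mul_le_mul_left _ hM1) hT1
    have h' : ((s-1:ℕ):ℚ) ≤ (T:ℚ) := by exact_mod_cast (by simpa using this)
    rwa [hcast] at h'
  have key : ∀ i, |(n i : ℚ) / (T:ℚ) - (m i : ℚ) / (M:ℚ)| ≤ (k:ℚ) * H / ((s:ℚ) - 1) := by
    intro i
    have hb1 : n i * M ≤ T * m i + H * M := by
      have h1 : n i ≤ (s - 1) * m i + H := (hbound i).2
      calc n i * M ≤ ((s - 1) * m i + H) * M := Nat.mul_le_mul_right _ h1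
        _ = (s - 1) * M * m i + H * M := by ring
        _ ≤ T * m i + H * M := by
            exact Nat.add_le_add_right (Nat.mul_le_mul_right _ hT1) _
    have hb2 : T * m i ≤ n i * M + M * (k * H) := by
      have hmi : m i ≤ M := Finset.single_le_sum (f := m) (fun j _ => Nat.zero_le _)
        (Finset.mem_univ i)
      calc T * m i ≤ ((s - 1) * M + k * H) * m i := Nat.mul_le_mul_right _ hT2
        _ = (s - 1) * m i * M + k * H * m i := by ring
        _ ≤ n i * M + M * (k * H) := by
            have := Nat.mul_le_mul_right M (hbound i).1
            have h2 : k * H * m i ≤ M * (k * H) := by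
              calc k * H * m i ≤ k * H * M := Nat.mul_le_mul_left _ hmi
                _ = M * (k * H) := by ring
            omega
    have hnum : |(n i : ℚ) * M - (T:ℚ) * m i| ≤ (k:ℚ) * H * M := by
      have c1 : (n i : ℚ) * M ≤ (T:ℚ) * m i + H * M := by exact_mod_cast hb1
      have c2 : (T:ℚ) * m i ≤ (n i : ℚ) * M + M * (k * H) := by exact_mod_cast hb2
      have hk1 : (1:ℚ) ≤ (k:ℚ) := by
        exact_mod_cast Nat.one_le_iff_ne_zero.mpr (NeZero.ne k)
      have hH1 : (1:ℚ) ≤ (H:ℚ) := by exact_mod_cast hH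
      rw [abs_le]
      constructor <;> nlinarith
    have hrw : (n i : ℚ) / (T:ℚ) - (m i : ℚ) / (M:ℚ)
        = ((n i : ℚ) * M - (T:ℚ) * m i) / ((T:ℚ) * M) :=
      div_sub_div _ _ (ne_of_gt hTQ) (ne_of_gt hMQ)
    rw [hrw, abs_div, abs_of_pos (mul_pos hTQ hMQ)]
    calc |(n i : ℚ) * M - (T:ℚ) * m i| / ((T:ℚ) * M)
        ≤ (k:ℚ) * H * M / ((T:ℚ) * M) := by
          apply div_le_div_of_nonneg_right hnum (le_of_lt (mul_pos hTQ hMQ))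
      _ = (k:ℚ) * H / (T:ℚ) := by
          field_simp
      _ ≤ (k:ℚ) * H / ((s:ℚ) - 1) := by
          apply div_le_div_of_nonneg_left _ (by linarith) hsT
          positivity
  obtain ⟨i, _, hi⟩ := Finset.exists_mem_eq_sup' (Finset.univ_nonempty (α := Fin k))
    (fun i => |(p i : ℚ) / ((∑ j, p j : ℕ) : ℚ) - (m i : ℚ) / ((M : ℕ) : ℚ)|)
  rw [hi] at hsep
  have hpi := congrFun heq i
  rw [← hpi] at hsep
  have := key i
  linarith
end

section
/- With the same hypotheses, if an atom α of 𝒜 is disjoint from top(ℬ), then g(α) = φ(α). -/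
open MeasureTheory Set TopologicalSpace

/-- If `ℬ = (B i j)` is a `K`-partition refining the clopen partition `𝒜 = (α a)` and
respecting `φ`, and `g` is compatible with `ℬ`, then for every atom `α a` of `𝒜`,
`g(α a \ top ℬ) = φ(α a) \ base ℬ`. -/
theorem stmt9 {X : Type*} [TopologicalSpace X] [CompactSpace X] [MetrizableSpace X]
    [TotallyDisconnectedSpace X] [PerfectSpace X] [MeasurableSpace X] [BorelSpace X]
    (K : Set (Measure X)) (hKne : K.Nonempty) (hprob : ∀ μ ∈ K, IsProbabilityMeasure μ)
    (hfull : ∀ μ ∈ K, ∀ U : Set X, IsOpen U → U.Nonempty → 0 < μ U)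
    (φ g : X ≃ₜ X) (hφK : ∀ μ ∈ K, Measure.map φ μ = μ) (hgK : ∀ μ ∈ K, Measure.map g μ = μ)
    -- the clopen partition 𝒜
    {ι : Type*} [Fintype ι] (α : ι → Set X)
    (hαclopen : ∀ a, IsClopen (α a)) (hαdisj : Pairwise (Function.onFun Disjoint α))
    (hαcover : ⋃ a, α a = Set.univ)
    -- the K-partition ℬ
    {I : Type*} [Fintype I] (nh : I → ℕ) (B : I → ℕ → Set X)
    (hBclopen : ∀ i, ∀ j ≤ nh i, IsClopen (B i j))
    (hBdisj : ∀ i j i' j', j ≤ nh i → j' ≤ nh i' → (i, j) ≠ (i', j') →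
      Disjoint (B i j) (B i' j'))
    (hBcover : (⋃ i, ⋃ j ≤ nh i, B i j) = Set.univ)
    (hKpart : ∀ μ ∈ K, ∀ i, ∀ j ≤ nh i, ∀ l ≤ nh i, μ (B i j) = μ (B i l))
    -- ℬ refines 𝒜
    (hrefines : ∀ i, ∀ j ≤ nh i, ∃ a, B i j ⊆ α a)
    -- ℬ respects φ
    (hrespects : ∀ i, ∀ j < nh i, ∀ a, B i j ⊆ α a → B i (j + 1) ⊆ φ '' α a)
    -- g is compatible with ℬ
    (hcompat : ∀ i, ∀ j < nh i, g '' B i j = B i (j + 1)) :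
    ∀ a, Disjoint (α a) (⋃ i, B i (nh i)) → g '' α a = φ '' α a := by
  intro a hdisj
  -- first inclusion: g '' α a ⊆ φ '' α a
  have hsub : g '' α a ⊆ φ '' α a := by
    rintro _ ⟨x, hx, rfl⟩
    have hxU : x ∈ ⋃ i, ⋃ j ≤ nh i, B i j := hBcover ▸ mem_univ x
    simp only [mem_iUnion] at hxU
    obtain ⟨i, j, hj, hxB⟩ := hxU
    have hjlt : j < nh i := by
      rcases lt_or_eq_of_le hj with h | h
      · exact h
      · exfalso
        exact absurd rfl
          (hdisj.ne_of_mem hx (mem_iUnion.mpr ⟨i, h ▸ hxB⟩))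
    obtain ⟨a', ha'⟩ := hrefines i j hj
    have haa : a' = a := by
      by_contra hne
      exact (hαdisj hne).ne_of_mem (ha' hxB) hx rfl
    subst haa
    have hgx : g x ∈ B i (j + 1) := (hcompat i j hjlt) ▸ mem_image_of_mem g hxB
    exact hrespects i j hjlt a' ha' hgx
  -- measures
  obtain ⟨μ, hμ⟩ := hKne
  haveI := hprob μ hμ
  have hαcl := hαclopen a
  have hgcl : IsClopen (g '' α a) := ⟨g.isClosedMap _ hαcl.isClosed, g.isOpenMap _ hαcl.isOpen⟩
  have hφcl : IsClopen (φ '' α a) := ⟨φ.isClosedMap _ hαcl.isClosed, φ.isOpenMap _ hαcl.isOpen⟩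
  have hαm : MeasurableSet (α a) := hαcl.isOpen.measurableSet
  have hgm : MeasurableSet (g '' α a) := hgcl.isOpen.measurableSet
  have hφm : MeasurableSet (φ '' α a) := hφcl.isOpen.measurableSet
  have hgmeas : μ (g '' α a) = μ (α a) := by
    conv_lhs => rw [← hgK μ hμ]
    rw [Measure.map_apply g.continuous.measurable hgm,
      Set.preimage_image_eq _ g.injective]
  have hφmeas : μ (φ '' α a) = μ (α a) := by
    conv_lhs => rw [← hφK μ hμ]
    rw [Measure.map_apply φ.continuous.measurable hφm,
      Set.preimage_image_eq _ φ.injective]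
  -- the difference is open with zero measure, hence empty
  have hdne : μ (φ '' α a \ g '' α a) = 0 := by
    rw [measure_diff hsub hgm.nullMeasurableSet (measure_ne_top μ _), hgmeas, hφmeas,
      tsub_self]
  have hempty : φ '' α a \ g '' α a = ∅ := by
    by_contra hne
    have hpos := hfull μ hμ _ (hφcl.isOpen.sdiff hgcl.isClosed)
      (nonempty_iff_ne_empty.mpr hne)
    exact absurd hdne hpos.ne'
  exact Subset.antisymm hsub (diff_eq_empty.mp hempty)
end
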